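/- Let H = H₀ ⊕ H₁ be an orthogonal decomposition of a finite-dimensional inner product space and let X be a self-adjoint linear operator on H with blocks Xᵢⱼ. Write S = X₀₀ − X₀₁X₁₁⁺X₁₀ for the generalized Schur complement. Then the Moore–Penrose pseudoinverse X⁺ equals the block operator [[S⁺, −S⁺X₀₁X₁₁⁺],[−X₁₁⁺X₁₀S⁺, X₁₁⁺ + X₁₁⁺X₁₀S⁺X₀₁X₁₁⁺]] if and only if both ker X₁₁ ⊆ ker X₀₁ and ker S ⊆ ker X₁₀; and in that case (X⁺)₀₀ = S⁺ and S = ((X⁺)₀₀)⁺. -/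
import Mathlib

section aux
set_option linter.unusedSectionVars false
variable {R : Type*} [Ring R] [StarRing R]

lemma mp_unique (x y z : R)
    (hy1 : y * (x * y) = y) (hy2 : x * (y * x) = x)
    (hy3 : star (y * x) = y * x) (hy4 : star (x * y) = x * y)
    (hz1 : z * (x * z) = z) (hz2 : x * (z * x) = x)
    (hz3 : star (z * x) = z * x) (hz4 : star (x * z) = x * z) :
    y = z := by
  have a1 : (x * z) * (x * y) = x * y := by
    rw [mul_assoc, ← mul_assoc z x y, ← mul_assoc x, hz2]
  have a2 : (x * y) * (x * z) = x * z := by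
    rw [← mul_assoc, mul_assoc x y x, hy2]
  have h1 : x * y = x * z := by
    calc x * y = star (x * y) := hy4.symm
    _ = star ((x * z) * (x * y)) := by rw [a1]
    _ = star (x * y) * star (x * z) := by rw [star_mul]
    _ = (x * y) * (x * z) := by rw [hy4, hz4]
    _ = x * z := a2
  have b1 : (y * x) * (z * x) = y * x := by rw [mul_assoc, hz2]
  have b2 : (z * x) * (y * x) = z * x := by rw [mul_assoc, hy2]
  have h2 : y * x = z * x := by
    calc y * x = star (y * x) := hy3.symm
    _ = star ((y * x) * (z * x)) := by rw [b1]
    _ = star (z * x) * star (y * x) := by rw [star_mul]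
    _ = (z * x) * (y * x) := by rw [hy3, hz3]
    _ = z * x := b2
  calc y = y * (x * y) := hy1.symm
  _ = y * (x * z) := by rw [h1]
  _ = (y * x) * z := by rw [mul_assoc]
  _ = (z * x) * z := by rw [h2]
  _ = z * (x * z) := by rw [mul_assoc]
  _ = z := hz1

lemma aux_zero {p q u v : R} (hu : u * p = u) (hv : q * v = v) (hpq : p * q = 0) :
    u * v = 0 := by
  calc u * v = (u * p) * (q * v) := by rw [hu, hv]
  _ = u * ((p * q) * v) := by rw [mul_assoc, ← mul_assoc p q v]
  _ = 0 := by rw [hpq, zero_mul, mul_zero]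

lemma aux_zero' {p q u v : R} (hu : u * p = u) (hv : q * v = v) (hpq : p * q = 0) :
    ∀ y : R, u * (v * y) = 0 := by
  intro y; rw [← mul_assoc, aux_zero hu hv hpq, zero_mul]

lemma aux_labs {p u : R} (h : p * u = u) : ∀ y : R, p * (u * y) = u * y := by
  intro y; rw [← mul_assoc, h]

lemma aux_labs0 {p u : R} (h : p * u = 0) : ∀ y : R, p * (u * y) = 0 := by
  intro y; rw [← mul_assoc, h, zero_mul]

lemma aux_ext3 {u v w u' : R} (h : u * (v * w) = u') :
    ∀ y : R, u * (v * (w * y)) = u' * y := by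
  intro y; rw [← mul_assoc, ← mul_assoc, mul_assoc u v w, h]

end aux

/-- The generalized Schur complement `X₀₀ - X₀₁ X₁₁⁺ X₁₀` of an operator `X` with respect
to orthogonal projections `P0, P1`, where `B` is the Moore–Penrose pseudoinverse of the
block `X₁₁ = P1 X P1`. -/
noncomputable def gschurLM {𝕂 : Type*} [RCLike 𝕂] {H : Type*} [NormedAddCommGroup H]
    [InnerProductSpace 𝕂 H] (P0 P1 X B : H →ₗ[𝕂] H) : H →ₗ[𝕂] H :=
  (P0 ∘ₗ (X ∘ₗ P0)) - (P0 ∘ₗ (X ∘ₗ P1)) ∘ₗ (B ∘ₗ (P1 ∘ₗ (X ∘ₗ P0)))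

/-- Generalized Banachiewicz inversion formula: let `X` be a
self-adjoint operator on a finite-dimensional inner product space `H = H₀ ⊕ H₁`
(orthogonal projections `P0, P1`, blocks `Xᵢⱼ = Pᵢ X Pⱼ`), let `B = X₁₁⁺`,
`S = X₀₀ - X₀₁X₁₁⁺X₁₀` the generalized Schur complement, `Sp = S⁺`, and `Xp = X⁺` (all
Moore–Penrose pseudoinverses, characterized by the four Penrose equations).  Then
`X⁺ = [[S⁺, -S⁺X₀₁X₁₁⁺],[-X₁₁⁺X₁₀S⁺, X₁₁⁺ + X₁₁⁺X₁₀S⁺X₀₁X₁₁⁺]]` iff both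
`ker X₁₁ ⊆ ker X₀₁` and `ker S ⊆ ker X₁₀`; and in that case `(X⁺)₀₀ = S⁺` and `S` is the
Moore–Penrose pseudoinverse of `(X⁺)₀₀`. -/
theorem stmt_13
    {𝕂 : Type*} [RCLike 𝕂]
    {H : Type*} [NormedAddCommGroup H] [InnerProductSpace 𝕂 H] [FiniteDimensional 𝕂 H]
    (P0 P1 : H →ₗ[𝕂] H)
    (hP0 : P0 ∘ₗ P0 = P0) (hP0sa : LinearMap.adjoint P0 = P0)
    (hP1 : P1 ∘ₗ P1 = P1) (hP1sa : LinearMap.adjoint P1 = P1)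
    (hsum : P0 + P1 = 1)
    (X : H →ₗ[𝕂] H) (hXsa : LinearMap.adjoint X = X)
    (B : H →ₗ[𝕂] H)
    (hB1 : B ∘ₗ ((P1 ∘ₗ (X ∘ₗ P1)) ∘ₗ B) = B)
    (hB2 : (P1 ∘ₗ (X ∘ₗ P1)) ∘ₗ (B ∘ₗ (P1 ∘ₗ (X ∘ₗ P1))) = P1 ∘ₗ (X ∘ₗ P1))
    (hB3 : LinearMap.adjoint (B ∘ₗ (P1 ∘ₗ (X ∘ₗ P1))) = B ∘ₗ (P1 ∘ₗ (X ∘ₗ P1)))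
    (hB4 : LinearMap.adjoint ((P1 ∘ₗ (X ∘ₗ P1)) ∘ₗ B) = (P1 ∘ₗ (X ∘ₗ P1)) ∘ₗ B)
    (Sp : H →ₗ[𝕂] H)
    (hSp1 : Sp ∘ₗ (gschurLM P0 P1 X B ∘ₗ Sp) = Sp)
    (hSp2 : gschurLM P0 P1 X B ∘ₗ (Sp ∘ₗ gschurLM P0 P1 X B) = gschurLM P0 P1 X B)
    (hSp3 : LinearMap.adjoint (Sp ∘ₗ gschurLM P0 P1 X B) = Sp ∘ₗ gschurLM P0 P1 X B)
    (hSp4 : LinearMap.adjoint (gschurLM P0 P1 X B ∘ₗ Sp) = gschurLM P0 P1 X B ∘ₗ Sp)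
    (Xp : H →ₗ[𝕂] H)
    (hXp1 : Xp ∘ₗ (X ∘ₗ Xp) = Xp) (hXp2 : X ∘ₗ (Xp ∘ₗ X) = X)
    (hXp3 : LinearMap.adjoint (Xp ∘ₗ X) = Xp ∘ₗ X)
    (hXp4 : LinearMap.adjoint (X ∘ₗ Xp) = X ∘ₗ Xp) :
    ((Xp = Sp - Sp ∘ₗ ((P0 ∘ₗ (X ∘ₗ P1)) ∘ₗ B) - B ∘ₗ ((P1 ∘ₗ (X ∘ₗ P0)) ∘ₗ Sp) + B
          + B ∘ₗ ((P1 ∘ₗ (X ∘ₗ P0)) ∘ₗ (Sp ∘ₗ ((P0 ∘ₗ (X ∘ₗ P1)) ∘ₗ B)))) ↔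
      (LinearMap.ker (P1 ∘ₗ (X ∘ₗ P1)) ≤ LinearMap.ker (P0 ∘ₗ (X ∘ₗ P1)) ∧
        LinearMap.ker (gschurLM P0 P1 X B) ≤ LinearMap.ker (P1 ∘ₗ (X ∘ₗ P0)))) ∧
    ((LinearMap.ker (P1 ∘ₗ (X ∘ₗ P1)) ≤ LinearMap.ker (P0 ∘ₗ (X ∘ₗ P1)) ∧
        LinearMap.ker (gschurLM P0 P1 X B) ≤ LinearMap.ker (P1 ∘ₗ (X ∘ₗ P0))) →
      (P0 ∘ₗ (Xp ∘ₗ P0) = Sp ∧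
        gschurLM P0 P1 X B ∘ₗ ((P0 ∘ₗ (Xp ∘ₗ P0)) ∘ₗ gschurLM P0 P1 X B) =
          gschurLM P0 P1 X B ∧
        (P0 ∘ₗ (Xp ∘ₗ P0)) ∘ₗ (gschurLM P0 P1 X B ∘ₗ (P0 ∘ₗ (Xp ∘ₗ P0))) =
          P0 ∘ₗ (Xp ∘ₗ P0) ∧
        LinearMap.adjoint (gschurLM P0 P1 X B ∘ₗ (P0 ∘ₗ (Xp ∘ₗ P0))) =
          gschurLM P0 P1 X B ∘ₗ (P0 ∘ₗ (Xp ∘ₗ P0)) ∧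
        LinearMap.adjoint ((P0 ∘ₗ (Xp ∘ₗ P0)) ∘ₗ gschurLM P0 P1 X B) =
          (P0 ∘ₗ (Xp ∘ₗ P0)) ∘ₗ gschurLM P0 P1 X B)) := by
  simp only [gschurLM, ← Module.End.mul_eq_comp, ← LinearMap.star_eq_adjoint] at *
  obtain ⟨d, hd⟩ : ∃ y : H →ₗ[𝕂] H, y = P0 * (X * P0) := ⟨_, rfl⟩
  obtain ⟨a, ha⟩ : ∃ y : H →ₗ[𝕂] H, y = P0 * (X * P1) := ⟨_, rfl⟩
  obtain ⟨c, hc⟩ : ∃ y : H →ₗ[𝕂] H, y = P1 * (X * P0) := ⟨_, rfl⟩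
  obtain ⟨x1, hx1⟩ : ∃ y : H →ₗ[𝕂] H, y = P1 * (X * P1) := ⟨_, rfl⟩
  simp only [← hd, ← ha, ← hc, ← hx1] at hB1 hB2 hB3 hB4 hSp1 hSp2 hSp3 hSp4 ⊢
  obtain ⟨S, hS⟩ : ∃ y : H →ₗ[𝕂] H, y = d - a * (B * c) := ⟨_, rfl⟩
  simp only [← hS] at hSp1 hSp2 hSp3 hSp4 ⊢
  -- projection orthogonality
  have hp01 : P0 * P1 = 0 := by
    have h := congrArg (fun z => P0 * z) hsum
    simp only [mul_add, hP0, mul_one] at h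
    exact add_eq_left.mp h
  have hp10 : P1 * P0 = 0 := by
    have h := congrArg (fun z => z * P0) hsum
    simp only [add_mul, hP0, one_mul] at h
    exact add_eq_left.mp h
  -- letter supports
  have hdl : P0 * d = d := by rw [hd, ← mul_assoc, hP0]
  have hdr : d * P0 = d := by rw [hd, mul_assoc, mul_assoc, hP0]
  have hal : P0 * a = a := by rw [ha, ← mul_assoc, hP0]
  have har : a * P1 = a := by rw [ha, mul_assoc, mul_assoc, hP1]
  have hcl : P1 * c = c := by rw [hc, ← mul_assoc, hP1]
  have hcr : c * P0 = c := by rw [hc, mul_assoc, mul_assoc, hP0]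
  have hx1l : P1 * x1 = x1 := by rw [hx1, ← mul_assoc, hP1]
  have hx1r : x1 * P1 = x1 := by rw [hx1, mul_assoc, mul_assoc, hP1]
  have hdl0 : P1 * d = 0 := by rw [← hdl, ← mul_assoc, hp10, zero_mul]
  have hdr0 : d * P1 = 0 := by rw [← hdr, mul_assoc, hp01, mul_zero]
  have hal0 : P1 * a = 0 := by rw [← hal, ← mul_assoc, hp10, zero_mul]
  have har0 : a * P0 = 0 := by rw [← har, mul_assoc, hp10, mul_zero]
  have hcl0 : P0 * c = 0 := by rw [← hcl, ← mul_assoc, hp01, zero_mul]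
  have hcr0 : c * P1 = 0 := by rw [← hcr, mul_assoc, hp01, mul_zero]
  have hx1l0 : P0 * x1 = 0 := by rw [← hx1l, ← mul_assoc, hp01, zero_mul]
  have hx1r0 : x1 * P0 = 0 := by rw [← hx1r, mul_assoc, hp10, mul_zero]
  -- stars of letters
  have sa : star a = c := by
    rw [ha, hc, star_mul, star_mul, hXsa, hP0sa, hP1sa, mul_assoc]
  have sc : star c = a := by
    rw [ha, hc, star_mul, star_mul, hXsa, hP0sa, hP1sa, mul_assoc]
  have sd : star d = d := by
    rw [hd, star_mul, star_mul, hXsa, hP0sa, mul_assoc]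
  have sx1 : star x1 = x1 := by
    rw [hx1, star_mul, star_mul, hXsa, hP1sa, mul_assoc]
  -- support of B
  have hxb1 : x1 * B = P1 * (x1 * B) := by rw [← mul_assoc, hx1l]
  have hxb2 : (x1 * B) * P1 = x1 * B := by
    have h := congrArg star hxb1
    rw [star_mul (P1 : H →ₗ[𝕂] H) (x1 * B), hP1sa, hB4] at h
    exact h.symm
  have hbr : B * P1 = B := by
    calc B * P1 = (B * (x1 * B)) * P1 := by rw [hB1]
    _ = B * ((x1 * B) * P1) := by rw [mul_assoc]
    _ = B * (x1 * B) := by rw [hxb2]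
    _ = B := hB1
  have hbx1 : B * x1 = (B * x1) * P1 := by rw [mul_assoc, hx1r]
  have hbx2 : P1 * (B * x1) = B * x1 := by
    have h := congrArg star hbx1
    rw [star_mul (B * x1) (P1 : H →ₗ[𝕂] H), hP1sa, hB3] at h
    exact h.symm
  have hbl : P1 * B = B := by
    calc P1 * B = P1 * (B * (x1 * B)) := by rw [hB1]
    _ = (P1 * (B * x1)) * B := by rw [← mul_assoc, ← mul_assoc, mul_assoc P1 B x1]
    _ = (B * x1) * B := by rw [hbx2]
    _ = B := by rw [mul_assoc, hB1]
  have hbl0 : P0 * B = 0 := by rw [← hbl, ← mul_assoc, hp01, zero_mul]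
  have hbr0 : B * P0 = 0 := by rw [← hbr, mul_assoc, hp10, mul_zero]
  -- star B = B
  have sB : star B = B := by
    refine mp_unique x1 (star B) B ?_ ?_ ?_ ?_ hB1 hB2 hB3 hB4
    · have e := congrArg star hB1
      rw [star_mul, star_mul, sx1, mul_assoc] at e
      exact e
    · have e := congrArg star hB2
      rw [star_mul, star_mul, sx1, mul_assoc] at e
      exact e
    · rw [star_mul, star_star, sx1]
      rw [show star B * x1 = x1 * B from by rw [← hB4, star_mul, sx1]]
    · rw [star_mul, star_star, sx1]
      rw [show x1 * star B = B * x1 from by rw [← hB3, star_mul, sx1]]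
  have comm_bx : x1 * B = B * x1 := by
    rw [← hB4, star_mul, sB, sx1]
  -- S letters
  have hSl : P0 * S = S := by rw [hS, mul_sub, hdl, ← mul_assoc P0 a (B*c), hal]
  have hSr : S * P0 = S := by rw [hS, sub_mul, hdr, mul_assoc a (B*c) P0, mul_assoc B c P0, hcr]
  have hSl0 : P1 * S = 0 := by rw [← hSl, ← mul_assoc, hp10, zero_mul]
  have hSr0 : S * P1 = 0 := by rw [← hSr, mul_assoc, hp01, mul_zero]
  have sS : star S = S := by
    rw [hS, star_sub, sd, star_mul, star_mul, sB, sc, sa, mul_assoc]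
  -- support of Sp (mirror of B with S, P0)
  have hxs1 : S * Sp = P0 * (S * Sp) := by rw [← mul_assoc, hSl]
  have hxs2 : (S * Sp) * P0 = S * Sp := by
    have h := congrArg star hxs1
    rw [star_mul (P0 : H →ₗ[𝕂] H) (S * Sp), hP0sa, hSp4] at h
    exact h.symm
  have hspr : Sp * P0 = Sp := by
    calc Sp * P0 = (Sp * (S * Sp)) * P0 := by rw [hSp1]
    _ = Sp * ((S * Sp) * P0) := by rw [mul_assoc]
    _ = Sp * (S * Sp) := by rw [hxs2]
    _ = Sp := hSp1
  have hss1 : Sp * S = (Sp * S) * P0 := by rw [mul_assoc, hSr]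
  have hss2 : P0 * (Sp * S) = Sp * S := by
    have h := congrArg star hss1
    rw [star_mul (Sp * S) (P0 : H →ₗ[𝕂] H), hP0sa, hSp3] at h
    exact h.symm
  have hspl : P0 * Sp = Sp := by
    calc P0 * Sp = P0 * (Sp * (S * Sp)) := by rw [hSp1]
    _ = (P0 * (Sp * S)) * Sp := by rw [← mul_assoc, ← mul_assoc, mul_assoc P0 Sp S]
    _ = (Sp * S) * Sp := by rw [hss2]
    _ = Sp := by rw [mul_assoc, hSp1]
  have hspl0 : P1 * Sp = 0 := by rw [← hspl, ← mul_assoc, hp10, zero_mul]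
  have hspr0 : Sp * P1 = 0 := by rw [← hspr, mul_assoc, hp01, mul_zero]
  have sSp : star Sp = Sp := by
    refine mp_unique S (star Sp) Sp ?_ ?_ ?_ ?_ hSp1 hSp2 hSp3 hSp4
    · have e := congrArg star hSp1
      rw [star_mul, star_mul, sS, mul_assoc] at e
      exact e
    · have e := congrArg star hSp2
      rw [star_mul, star_mul, sS, mul_assoc] at e
      exact e
    · rw [star_mul, star_star, sS]
      rw [show star Sp * S = S * Sp from by rw [← hSp4, star_mul, sS]]
    · rw [star_mul, star_star, sS]
      rw [show S * star Sp = Sp * S from by rw [← hSp3, star_mul, sS]]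
  have comm_SSp : S * Sp = Sp * S := by
    rw [← hSp4, star_mul, sSp, sS]
  -- decomposition of X
  have hX : X = d + a + c + x1 := by
    calc X = (P0 + P1) * (X * (P0 + P1)) := by rw [hsum, one_mul, mul_one]
    _ = d + a + c + x1 := by rw [hd, ha, hc, hx1]; noncomm_ring
  -- abbreviations
  obtain ⟨T, hT⟩ : ∃ y : H →ₗ[𝕂] H,
      y = Sp - Sp * (a * B) - B * (c * Sp) + B + B * (c * (Sp * (a * B))) := ⟨_, rfl⟩
  rw [← hT]
  obtain ⟨g, hg⟩ : ∃ y : H →ₗ[𝕂] H, y = c - x1 * (B * c) := ⟨_, rfl⟩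
  obtain ⟨n, hn⟩ : ∃ y : H →ₗ[𝕂] H, y = a - S * (Sp * a) := ⟨_, rfl⟩
  obtain ⟨m, hm⟩ : ∃ y : H →ₗ[𝕂] H, y = a - a * (B * x1) := ⟨_, rfl⟩
  obtain ⟨k, hk⟩ : ∃ y : H →ₗ[𝕂] H, y = c - c * (Sp * S) := ⟨_, rfl⟩
  -- star of T
  have sT : star T = T := by
    rw [hT]
    simp only [star_sub, star_add, star_mul, sB, sSp, sa, sc]
    noncomm_ring
  -- supports of g n m k
  have hgl : P1 * g = g := by rw [hg, mul_sub, hcl, ← mul_assoc P1 x1 (B*c), hx1l]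
  have hgl0 : P0 * g = 0 := by rw [← hgl, ← mul_assoc, hp01, zero_mul]
  have hnl : P0 * n = n := by rw [hn, mul_sub, hal, ← mul_assoc P0 S (Sp*a), hSl]
  have hnl0 : P1 * n = 0 := by rw [← hnl, ← mul_assoc, hp10, zero_mul]
  have hmr : m * P1 = m := by
    rw [hm, sub_mul, har, mul_assoc a (B*x1) P1, mul_assoc B x1 P1, hx1r]
  have hmr0 : m * P0 = 0 := by rw [← hmr, mul_assoc, hp10, mul_zero]
  have hkr : k * P0 = k := by
    rw [hk, sub_mul, hcr, mul_assoc c (Sp*S) P0, mul_assoc Sp S P0, hSr]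
  have hkr0 : k * P1 = 0 := by rw [← hkr, mul_assoc, hp01, mul_zero]
  have sm : star m = g := by
    simp only [hm, hg, star_sub, star_mul, sa, sB, sx1]
    noncomm_ring
  have sn : star n = k := by
    simp only [hn, hk, star_sub, star_mul, sa, sSp, sS]
    noncomm_ring
  -- main product formula
  have F1 : X * T = S * Sp + x1 * B + (g * Sp + (n * B - g * (Sp * (a * B)))) := by
    rw [hT, hg, hn, hS]
    conv_lhs => rw [hX]
    simp only [mul_add, add_mul, mul_sub, sub_mul, mul_assoc,
      aux_zero hdr hbl hp01, aux_zero' hdr hbl hp01,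
      aux_zero har hspl hp10, aux_zero' har hspl hp10,
      aux_zero hcr hbl hp01, aux_zero' hcr hbl hp01,
      aux_zero hx1r hspl hp10, aux_zero' hx1r hspl hp10,
      mul_zero, zero_mul, sub_zero, zero_sub, add_zero, zero_add, neg_neg, mul_neg, neg_mul, neg_zero, add_neg_cancel, neg_add_cancel]
    noncomm_ring
  have sXT : T * X = star (X * T) := by rw [star_mul, sT, hXsa]
  -- kernel conditions as algebraic identities
  have kiff1 : LinearMap.ker x1 ≤ LinearMap.ker a ↔ a * (B * x1) = a := by
    constructor
    · intro h
      ext v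
      have h1 : x1 (v - B (x1 v)) = 0 := by
        have e : x1 (B (x1 v)) = x1 v := by
          have := congrFun (congrArg DFunLike.coe hB2) v
          simpa [Module.End.mul_apply] using this
        simp [map_sub, e]
      have h2 : a (v - B (x1 v)) = 0 := h (LinearMap.mem_ker.mpr h1)
      simp only [map_sub, sub_eq_zero] at h2
      simpa [Module.End.mul_apply] using h2.symm
    · intro he v hv
      have hv' : x1 v = 0 := LinearMap.mem_ker.mp hv
      have : a (B (x1 v)) = a v := by
        have := congrFun (congrArg DFunLike.coe he) v
        simpa [Module.End.mul_apply] using this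
      rw [hv'] at this
      simp only [map_zero] at this
      exact LinearMap.mem_ker.mpr this.symm
  have kiff2 : LinearMap.ker S ≤ LinearMap.ker c ↔ c * (Sp * S) = c := by
    constructor
    · intro h
      ext v
      have h1 : S (v - Sp (S v)) = 0 := by
        have e : S (Sp (S v)) = S v := by
          have := congrFun (congrArg DFunLike.coe hSp2) v
          simpa [Module.End.mul_apply] using this
        simp [map_sub, e]
      have h2 : c (v - Sp (S v)) = 0 := h (LinearMap.mem_ker.mpr h1)
      simp only [map_sub, sub_eq_zero] at h2
      simpa [Module.End.mul_apply] using h2.symm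
    · intro he v hv
      have hv' : S v = 0 := LinearMap.mem_ker.mp hv
      have : c (Sp (S v)) = c v := by
        have := congrFun (congrArg DFunLike.coe he) v
        simpa [Module.End.mul_apply] using this
      rw [hv'] at this
      simp only [map_zero] at this
      exact LinearMap.mem_ker.mpr this.symm
  -- the backward (⇐) direction of the iff
  have bwd : (LinearMap.ker x1 ≤ LinearMap.ker a ∧ LinearMap.ker S ≤ LinearMap.ker c) →
      Xp = T := by
    rintro ⟨hk1, hk2⟩
    have e1 : a * (B * x1) = a := kiff1.mp hk1
    have e2 : c * (Sp * S) = c := kiff2.mp hk2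
    have e1s : x1 * (B * c) = c := by
      have h := congrArg star e1
      rw [star_mul, star_mul, sB, sx1, sa, mul_assoc] at h
      exact h
    have e2s : S * (Sp * a) = a := by
      have h := congrArg star e2
      rw [star_mul, star_mul, sSp, sS, sc, mul_assoc] at h
      exact h
    have hg0 : g = 0 := by rw [hg, e1s, sub_self]
    have hn0 : n = 0 := by rw [hn, e2s, sub_self]
    have hXT : X * T = S * Sp + x1 * B := by
      rw [F1, hg0, hn0]; noncomm_ring
    have hstar2 : star (S * Sp + x1 * B) = S * Sp + x1 * B := by
      rw [star_add, star_mul, star_mul, sS, sSp, sx1, sB, ← comm_SSp, ← comm_bx]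
    have hTX : T * X = S * Sp + x1 * B := by rw [sXT, hXT, hstar2]
    have hSpd : S * (Sp * d) = d := by
      have hd2 : d = S + a * (B * c) := by rw [hS]; noncomm_ring
      conv_lhs => rw [hd2]
      rw [mul_add, mul_add, hSp2, aux_ext3 e2s]
      exact hd2.symm
    have pT1 : T * (X * T) = T := by
      rw [hXT]
      conv_lhs => rw [hT]
      conv_rhs => rw [hT]
      simp only [mul_add, add_mul, mul_sub, sub_mul, mul_assoc,
        aux_zero' hbr hSl hp10, aux_zero hbr hSl hp10,
        aux_zero' hspr hx1l hp01, aux_zero hspr hx1l hp01,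
        hSp1, hB1, aux_ext3 hSp1, aux_ext3 hB1,
        mul_zero, zero_mul, sub_zero, zero_sub, add_zero, zero_add, neg_neg, mul_neg, neg_mul, neg_zero, add_neg_cancel, neg_add_cancel]
      noncomm_ring
    have pT2 : X * (T * X) = X := by
      rw [← mul_assoc, hXT]
      conv_lhs => rw [hX]
      conv_rhs => rw [hX]
      simp only [mul_add, add_mul, mul_sub, sub_mul, mul_assoc,
        aux_zero har hSl hp10, aux_zero' har hSl hp10,
        aux_zero hx1r hSl hp10, aux_zero' hx1r hSl hp10,
        aux_zero hdr hx1l hp01, aux_zero' hdr hx1l hp01,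
        aux_zero hdr hbl hp01, aux_zero' hdr hbl hp01,
        aux_zero har hal hp10, aux_zero' har hal hp10,
        aux_zero hcr hx1l hp01, aux_zero' hcr hx1l hp01,
        aux_zero hcr hbl hp01, aux_zero' hcr hbl hp01,
        aux_zero hspr hcl hp01, aux_zero' hspr hcl hp01,
        aux_zero hspr hx1l hp01, aux_zero' hspr hx1l hp01,
        aux_zero hbr hdl hp10, aux_zero' hbr hdl hp10,
        aux_zero hbr hal hp10, aux_zero' hbr hal hp10,
        hSpd, e2s, e1s, hB2,
        mul_zero, zero_mul, sub_zero, zero_sub, add_zero, zero_add, neg_neg, mul_neg, neg_mul, neg_zero, add_neg_cancel, neg_add_cancel]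
      try noncomm_ring
    have pT3 : star (T * X) = T * X := by rw [hTX, hstar2]
    have pT4 : star (X * T) = X * T := by rw [hXT, hstar2]
    exact mp_unique X Xp T hXp1 hXp2 hXp3 hXp4 pT1 pT2 pT3 pT4
  -- the forward (⇒) direction of the iff
  have fwd : Xp = T →
      (LinearMap.ker x1 ≤ LinearMap.ker a ∧ LinearMap.ker S ≤ LinearMap.ker c) := by
    intro hXpT
    have comm : T * X = X * T := by
      rw [sXT]; exact hXpT ▸ hXp4
    have hXTX : X * (T * X) = X := hXpT ▸ hXp2
    have starF1 : T * X = S * Sp + x1 * B + (Sp * m + (B * k - B * (c * (Sp * m)))) := by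
      have st : T * X = Sp * S + B * x1 + (Sp * m + (B * k - B * (c * (Sp * m)))) := by
        rw [sXT, F1, hg, hn, hm, hk]
        simp only [star_add, star_sub, star_mul, sS, sSp, sx1, sB, sa, sc]
        noncomm_ring
      rw [st, comm_SSp, comm_bx]
    have Hd : Sp * m + (B * k - B * (c * (Sp * m))) = g * Sp + (n * B - g * (Sp * (a * B))) := by
      have e := comm
      rw [F1, starF1] at e
      exact add_left_cancel e
    have IV : Sp * m = n * B := by
      have e := congrArg (fun y => P0 * (y * P1)) Hd
      simp only [mul_add, add_mul, mul_sub, sub_mul, mul_assoc,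
        hmr, hbr, har, hspr0,
        aux_labs hspl, aux_labs0 hbl0, aux_labs0 hgl0, aux_labs hnl,
        mul_zero, zero_mul, sub_zero, zero_sub, add_zero, zero_add, neg_neg, mul_neg, neg_mul, neg_zero, add_neg_cancel, neg_add_cancel,
        hmr0, hbr0, hkr0] at e
      exact e
    have V : B * k = g * Sp := by
      have e := congrArg (fun y => P1 * (y * P0)) Hd
      simp only [mul_add, add_mul, mul_sub, sub_mul, mul_assoc,
        hkr, hspr, hbr0, hmr0, har0,
        aux_labs0 hspl0, aux_labs hbl, aux_labs hgl, aux_labs0 hnl0,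
        mul_zero, zero_mul, sub_zero, zero_sub, add_zero, zero_add, neg_neg, mul_neg, neg_mul, neg_zero, add_neg_cancel, neg_add_cancel] at e
      exact e
    have I : S * (Sp * a) + n * (B * x1) = a := by
      have e := congrArg (fun y => P0 * (y * P1)) hXTX
      rw [show X * (T * X) = (X * T) * X from (mul_assoc X T X).symm, F1] at e
      rw [hX] at e
      simp only [mul_add, add_mul, mul_sub, sub_mul, mul_assoc,
        hdr0, hcr0, har, hx1r,
        aux_zero hspr hx1l hp01, aux_zero' hspr hx1l hp01,
        aux_zero hspr hcl hp01, aux_zero' hspr hcl hp01,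
        aux_zero hspr hbl hp01, aux_zero' hspr hbl hp01,
        aux_zero hbr hdl hp10, aux_zero' hbr hdl hp10,
        aux_zero hbr hal hp10, aux_zero' hbr hal hp10,
        aux_labs hSl, aux_labs hnl, aux_labs0 hx1l0, aux_labs0 hcl0,
        aux_labs0 hgl0, aux_labs hal, aux_labs hdl, hal0, hdl0, hcl0, hx1l0,
        aux_labs0 hbl0, hal,
        mul_zero, zero_mul, sub_zero, zero_sub, add_zero, zero_add, neg_neg, mul_neg, neg_mul, neg_zero, add_neg_cancel, neg_add_cancel] at e
      exact e
    have hSn : S * n = 0 := by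
      have t : S * (S * (Sp * a)) = S * a := by
        rw [show S * (Sp * a) = (Sp * S) * a from by rw [← mul_assoc, comm_SSp],
          ← mul_assoc, ← mul_assoc, mul_assoc S Sp S, hSp2]
      rw [hn, mul_sub, t, sub_self]
    have hSSpm0 : S * (Sp * m) = 0 := by
      have h := congrArg (fun y => S * y) IV
      simp only [← mul_assoc] at h
      rw [show S * n * B = 0 from by rw [hSn, zero_mul]] at h
      rw [← mul_assoc, h]
    have hnBx : n * (B * x1) = n := by
      have t : n * (B * x1) = a - S * (Sp * a) := eq_sub_of_add_eq' I
      rw [t, hn]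
    have hm0 : m = 0 := by
      have key : m - S * (Sp * m) = n - n * (B * x1) := by
        rw [hm, hn]; noncomm_ring
      rw [hnBx, sub_self, hSSpm0, sub_zero] at key
      exact key
    have hg0 : g = 0 := by rw [← sm, hm0, star_zero]
    have hBk0 : B * k = 0 := by rw [V, hg0, zero_mul]
    have hk0 : k = 0 := by
      have t1 : x1 * (B * c) = c - g := by rw [hg]; noncomm_ring
      have t2 : x1 * (B * k) = k - g + g * (Sp * S) := by
        have expand : x1 * (B * k) = x1 * (B * c) - (x1 * (B * c)) * (Sp * S) := by
          rw [hk]; noncomm_ring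
        rw [expand, t1, hk]; noncomm_ring
      have t3 : x1 * (B * k) = k := by rw [t2, hg0]; noncomm_ring
      rw [← t3, hBk0, mul_zero]
    constructor
    · apply kiff1.mpr
      have := hm0
      rw [hm] at this
      exact (sub_eq_zero.mp this).symm
    · apply kiff2.mpr
      have := hk0
      rw [hk] at this
      exact (sub_eq_zero.mp this).symm
  refine ⟨⟨fwd, bwd⟩, ?_⟩
  intro hker
  have hXpT : Xp = T := bwd hker
  have h00 : P0 * (Xp * P0) = Sp := by
    rw [hXpT, hT]
    simp only [mul_add, add_mul, mul_sub, sub_mul, mul_assoc,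
      hspr, hbr0, aux_labs hspl, aux_labs0 hbl0,
      mul_zero, zero_mul, sub_zero, zero_sub, add_zero, zero_add, neg_neg, mul_neg, neg_mul, neg_zero, add_neg_cancel, neg_add_cancel]
    exact hspl
  refine ⟨h00, ?_, ?_, ?_, ?_⟩
  · rw [h00]; exact hSp2
  · rw [h00]; exact hSp1
  · rw [h00]; exact hSp4
  · rw [h00]; exact hSp3
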